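/- For every x ∈ X that is feasible for 2RO-C, there exist finitely many convex recourse-stable regions D_1,…,D_R ⊆ U (for x) with cl(D_1) ∪ … ∪ cl(D_R) = U and R ≤ Σ_{i=0}^{n_ξ} C(|H(x)|, i); in particular R ≤ Σ_{i=0}^{n_ξ} C(η, i), so R ∈ O(η^{n_ξ}). -/

import Mathlib

section

variable {nx ny nξ m : ℕ}

/-- Feasibility of `(x,y)` under scenario `ξ` for the structured constraint system
`A(ξ)x + B(ξ)y ≥ h(ξ)` with `h(ξ) = h + Hξ`, `A(ξ) = A + Σᵢ Aⁱξᵢ`, `B(ξ) = B + Σᵢ Bⁱξᵢ`. -/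
def FeasS (hv : Fin m → ℤ) (H : Matrix (Fin m) (Fin nξ) ℤ)
    (A0 : Matrix (Fin m) (Fin nx) ℤ) (Ai : Fin nξ → Matrix (Fin m) (Fin nx) ℤ)
    (B0 : Matrix (Fin m) (Fin ny) ℤ) (Bi : Fin nξ → Matrix (Fin m) (Fin ny) ℤ)
    (x : Fin nx → ℝ) (y : Fin ny → ℝ) (ξ : Fin nξ → ℝ) : Prop :=
  ∀ l, (hv l : ℝ) + ∑ i, (H l i : ℝ) * ξ i ≤
    (∑ j, ((A0 l j : ℝ) + ∑ i, ξ i * (Ai i l j : ℝ)) * x j) +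
    ∑ j, ((B0 l j : ℝ) + ∑ i, ξ i * (Bi i l j : ℝ)) * y j

/-- `x` is feasible for the two-stage robust problem: every scenario admits a feasible
second-stage solution. -/
def Feasible2RO (hv : Fin m → ℤ) (H : Matrix (Fin m) (Fin nξ) ℤ)
    (A0 : Matrix (Fin m) (Fin nx) ℤ) (Ai : Fin nξ → Matrix (Fin m) (Fin nx) ℤ)
    (B0 : Matrix (Fin m) (Fin ny) ℤ) (Bi : Fin nξ → Matrix (Fin m) (Fin ny) ℤ)
    (Yx : (Fin nx → ℝ) → Set (Fin ny → ℝ)) (U : Set (Fin nξ → ℝ))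
    (x : Fin nx → ℝ) : Prop :=
  ∀ ξ ∈ U, ∃ y ∈ Yx x, FeasS hv H A0 Ai B0 Bi x y ξ

/-- A convex set `D` is recourse-stable for `x`. -/
def RecourseStableS (hv : Fin m → ℤ) (H : Matrix (Fin m) (Fin nξ) ℤ)
    (A0 : Matrix (Fin m) (Fin nx) ℤ) (Ai : Fin nξ → Matrix (Fin m) (Fin nx) ℤ)
    (B0 : Matrix (Fin m) (Fin ny) ℤ) (Bi : Fin nξ → Matrix (Fin m) (Fin ny) ℤ)
    (Yx : (Fin nx → ℝ) → Set (Fin ny → ℝ))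
    (x : Fin nx → ℝ) (D : Set (Fin nξ → ℝ)) : Prop :=
  ∀ y ∈ Yx x, (∀ ξ ∈ D, FeasS hv H A0 Ai B0 Bi x y ξ) ∨
    (∀ ξ ∈ D, ¬ FeasS hv H A0 Ai B0 Bi x y ξ)

/-- Coefficient vector `a_l(x,y)` of `ξ` in row `l` of the constraint system
`Σᵢ (Aⁱx + Bⁱy − Hᵢ)ξᵢ ≥ h − Ax − By`. -/
def rowCoef (H : Matrix (Fin m) (Fin nξ) ℤ) (Ai : Fin nξ → Matrix (Fin m) (Fin nx) ℤ)
    (Bi : Fin nξ → Matrix (Fin m) (Fin ny) ℤ)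
    (x : Fin nx → ℝ) (y : Fin ny → ℝ) (l : Fin m) : Fin nξ → ℝ :=
  fun i => (∑ j, (Ai i l j : ℝ) * x j) + (∑ j, (Bi i l j : ℝ) * y j) - (H l i : ℝ)

/-- Right-hand side `h_l(x,y)` of row `l`. -/
def rowRhs (hv : Fin m → ℤ) (A0 : Matrix (Fin m) (Fin nx) ℤ)
    (B0 : Matrix (Fin m) (Fin ny) ℤ)
    (x : Fin nx → ℝ) (y : Fin ny → ℝ) (l : Fin m) : ℝ :=
  (hv l : ℝ) - (∑ j, (A0 l j : ℝ) * x j) - ∑ j, (B0 l j : ℝ) * y j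

/-- The set `H(x)` of hyperplanes with nonzero normal induced by the constraint rows over all
`y ∈ Y(x)`, that intersect `U`. -/
def HypSet (hv : Fin m → ℤ) (H : Matrix (Fin m) (Fin nξ) ℤ)
    (A0 : Matrix (Fin m) (Fin nx) ℤ) (Ai : Fin nξ → Matrix (Fin m) (Fin nx) ℤ)
    (B0 : Matrix (Fin m) (Fin ny) ℤ) (Bi : Fin nξ → Matrix (Fin m) (Fin ny) ℤ)
    (Yx : (Fin nx → ℝ) → Set (Fin ny → ℝ)) (U : Set (Fin nξ → ℝ))
    (x : Fin nx → ℝ) : Set (Set (Fin nξ → ℝ)) :=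
  {P | ∃ y ∈ Yx x, ∃ l : Fin m, rowCoef H Ai Bi x y l ≠ 0 ∧
    P = {ξ | ∑ i, rowCoef H Ai Bi x y l i * ξ i = rowRhs hv A0 B0 x y l} ∧
    (P ∩ U).Nonempty}

end



open Module

/-- Sign condition for a boolean pattern. -/
def OKc (b : Bool) (t : ℝ) : Prop := if b then 0 < t else t < 0

lemma okc_true {r : ℝ} : OKc true r ↔ 0 < r := by simp [OKc]
lemma okc_false {r : ℝ} : OKc false r ↔ r < 0 := by simp [OKc]

lemma pascal_sum (k d : ℕ) :
    ∑ i ∈ Finset.range (d+1), (k+1).choose i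
      = ∑ i ∈ Finset.range (d+1), k.choose i + ∑ i ∈ Finset.range d, k.choose i := by
  induction d with
  | zero => simp
  | succ d ih =>
      rw [Finset.sum_range_succ, ih, Finset.sum_range_succ (f := fun i => k.choose i) (n := d+1),
        Finset.sum_range_succ (f := fun i => k.choose i) (n := d), Nat.choose_succ_succ]
      simp only [Nat.succ_eq_add_one]
      omega

lemma sum_choose_mono {k k' : ℕ} (n : ℕ) (h : k ≤ k') :
    ∑ i ∈ Finset.range n, k.choose i ≤ ∑ i ∈ Finset.range n, k'.choose i :=
  Finset.sum_le_sum fun i _ => Nat.choose_le_choose i h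

set_option maxHeartbeats 1000000 in
theorem cellCount {E : Type*} [AddCommGroup E] [Module ℝ E] [FiniteDimensional ℝ E] (k : ℕ) :
    ∀ (d : ℕ) (S : AffineSubspace ℝ E), finrank ℝ S.direction ≤ d →
    ∀ (f : Fin k → E →ᵃ[ℝ] ℝ),
    {σ : Fin k → Bool | ∃ x ∈ S, ∀ i, OKc (σ i) (f i x)}.ncard
      ≤ ∑ i ∈ Finset.range (d+1), k.choose i := by
  induction k with
  | zero =>
      intro d S hS f
      calc {σ : Fin 0 → Bool | ∃ x ∈ S, ∀ i, OKc (σ i) (f i x)}.ncard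
          ≤ (Set.univ : Set (Fin 0 → Bool)).ncard :=
            Set.ncard_le_ncard (Set.subset_univ _) Set.finite_univ
        _ = 1 := by rw [Set.ncard_univ]; simp [Nat.card_eq_fintype_card]
        _ ≤ _ := Finset.single_le_sum (f := fun i => Nat.choose 0 i)
            (fun i _ => Nat.zero_le _) (Finset.mem_range.mpr (Nat.succ_pos d))
  | succ k ih =>
      intro d S hS f
      classical
      set g : Fin k → E →ᵃ[ℝ] ℝ := fun i => f i.succ with hg
      set C := {σ : Fin (k+1) → Bool | ∃ x ∈ S, ∀ i, OKc (σ i) (f i x)} with hC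
      set A := {τ : Fin k → Bool | ∃ x ∈ S, ∀ i, OKc (τ i) (g i x)} with hA
      set r : (Fin (k+1) → Bool) → (Fin k → Bool) := fun σ => σ ∘ Fin.succ with hr
      set Cp := {σ | σ ∈ C ∧ σ 0 = true} with hCp
      set Cm := {σ | σ ∈ C ∧ σ 0 = false} with hCm
      have hinj : ∀ b : Bool, Set.InjOn r {σ | σ ∈ C ∧ σ 0 = b} := by
        intro b σ hσ σ' hσ' h
        funext i
        refine Fin.cases ?_ ?_ i
        · rw [hσ.2, hσ'.2]
        · intro j; exact congrFun h j
      have hCsub : C ⊆ Cp ∪ Cm := by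
        intro σ hσ
        cases h0 : σ 0
        · exact Or.inr ⟨hσ, h0⟩
        · exact Or.inl ⟨hσ, h0⟩
      have hsplit : C.ncard ≤ (r '' Cp).ncard + (r '' Cm).ncard := by
        rw [Set.ncard_image_of_injOn (hinj true), Set.ncard_image_of_injOn (hinj false)]
        exact le_trans (Set.ncard_le_ncard hCsub ((Set.toFinite Cp).union (Set.toFinite Cm)))
          (Set.ncard_union_le _ _)
      have hsplit2 : (r '' Cp).ncard + (r '' Cm).ncard
          = ((r '' Cp) ∪ (r '' Cm)).ncard + ((r '' Cp) ∩ (r '' Cm)).ncard :=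
        (Set.ncard_union_add_ncard_inter _ _ (Set.toFinite _) (Set.toFinite _)).symm
      have hUA : (r '' Cp) ∪ (r '' Cm) ⊆ A := by
        rintro τ (⟨σ, ⟨⟨x, hx, hok⟩, -⟩, rfl⟩ | ⟨σ, ⟨⟨x, hx, hok⟩, -⟩, rfl⟩) <;>
          exact ⟨x, hx, fun i => hok i.succ⟩
      have hAbound : A.ncard ≤ ∑ i ∈ Finset.range (d+1), k.choose i := ih d S hS g
      have main : C.ncard ≤ A.ncard + ((r '' Cp) ∩ (r '' Cm)).ncard := by
        calc C.ncard ≤ (r '' Cp).ncard + (r '' Cm).ncard := hsplit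
          _ = ((r '' Cp) ∪ (r '' Cm)).ncard + ((r '' Cp) ∩ (r '' Cm)).ncard := hsplit2
          _ ≤ A.ncard + ((r '' Cp) ∩ (r '' Cm)).ncard :=
              Nat.add_le_add_right (Set.ncard_le_ncard hUA (Set.toFinite A)) _
      by_cases hconst : ∀ p ∈ S, ∀ q ∈ S, f 0 p = f 0 q
      · have hIempty : (r '' Cp) ∩ (r '' Cm) = ∅ := by
          by_contra hne
          obtain ⟨τ, ⟨σ, ⟨⟨x, hx, hokx⟩, hσ0⟩, -⟩, ⟨σ', ⟨⟨y, hy, hoky⟩, hσ'0⟩, -⟩⟩ :=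
            Set.nonempty_iff_ne_empty.mpr hne
          have h1 : 0 < f 0 x := okc_true.mp (by have := hokx 0; rwa [hσ0] at this)
          have h2 : f 0 y < 0 := okc_false.mp (by have := hoky 0; rwa [hσ'0] at this)
          have := hconst x hx y hy
          linarith
        rw [hIempty] at main
        simp only [Set.ncard_empty, add_zero] at main
        calc C.ncard ≤ A.ncard := main
          _ ≤ ∑ i ∈ Finset.range (d+1), k.choose i := hAbound
          _ ≤ ∑ i ∈ Finset.range (d+1), (k+1).choose i := sum_choose_mono _ (Nat.le_succ k)
      · push_neg at hconst
        obtain ⟨p, hp, q, hq, hpq⟩ := hconst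
        set S' : AffineSubspace ℝ E :=
          { carrier := {z | z ∈ S ∧ f 0 z = 0}
            smul_vsub_vadd_mem' := by
              intro c p1 p2 p3 h1 h2 h3
              refine ⟨S.smul_vsub_vadd_mem c h1.1 h2.1 h3.1, ?_⟩
              have heq : f 0 (c • (p1 -ᵥ p2) +ᵥ p3) = c • ((f 0).linear (p1 -ᵥ p2)) +ᵥ f 0 p3 := by
                rw [AffineMap.map_vadd, (f 0).linear.map_smul]
              rw [heq, AffineMap.linearMap_vsub]
              have e1 : f 0 p1 = 0 := h1.2
              have e2 : f 0 p2 = 0 := h2.2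
              have e3 : f 0 p3 = 0 := h3.2
              simp [e1, e2, e3] } with hS'def
        have hdir : S'.direction ≤ S.direction ⊓ LinearMap.ker (f 0).linear := by
          rw [AffineSubspace.direction_eq_vectorSpan, vectorSpan_def]
          refine Submodule.span_le.mpr (Set.vsub_subset_iff.mpr ?_)
          intro a ha b hb
          refine Submodule.mem_inf.mpr ⟨S.vsub_mem_direction ha.1 hb.1, ?_⟩
          rw [LinearMap.mem_ker, AffineMap.linearMap_vsub]
          have ha2 : f 0 a = 0 := ha.2
          have hb2 : f 0 b = 0 := hb.2
          simp [ha2, hb2]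
        have hlt : S.direction ⊓ LinearMap.ker (f 0).linear < S.direction := by
          refine lt_of_le_of_ne inf_le_left ?_
          intro heq
          have hv : p -ᵥ q ∈ S.direction := S.vsub_mem_direction hp hq
          have hv' : p -ᵥ q ∈ S.direction ⊓ LinearMap.ker (f 0).linear := by
            rw [heq]; exact hv
          have hlin : (f 0).linear (p -ᵥ q) = 0 := (Submodule.mem_inf.mp hv').2
          rw [AffineMap.linearMap_vsub] at hlin
          exact hpq (by linarith [sub_eq_zero.mp hlin])
        have hfr : finrank ℝ (S.direction ⊓ LinearMap.ker (f 0).linear : Submodule ℝ E)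
            < finrank ℝ S.direction := Submodule.finrank_lt_finrank_of_lt hlt
        have hd1 : 1 ≤ d := by omega
        have hmono : finrank ℝ S'.direction
            ≤ finrank ℝ (S.direction ⊓ LinearMap.ker (f 0).linear : Submodule ℝ E) :=
          Submodule.finrank_mono hdir
        have hS' : finrank ℝ S'.direction ≤ d - 1 := by omega
        have hB := ih (d-1) S' hS' g
        have hdd : d - 1 + 1 = d := Nat.succ_pred_eq_of_pos hd1
        rw [hdd] at hB
        have hIB : (r '' Cp) ∩ (r '' Cm) ⊆ {τ | ∃ x ∈ S', ∀ i, OKc (τ i) (g i x)} := by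
          rintro τ ⟨⟨σ, ⟨⟨x, hx, hokx⟩, hσ0⟩, hrσ⟩, ⟨σ', ⟨⟨y, hy, hoky⟩, hσ'0⟩, hrσ'⟩⟩
          have hα : 0 < f 0 x := okc_true.mp (by have := hokx 0; rwa [hσ0] at this)
          have hβ : f 0 y < 0 := okc_false.mp (by have := hoky 0; rwa [hσ'0] at this)
          set t : ℝ := f 0 x / (f 0 x - f 0 y) with ht
          have hden : (0:ℝ) < f 0 x - f 0 y := by linarith
          have ht0 : 0 < t := div_pos hα hden
          have ht1 : t < 1 := (div_lt_one hden).mpr (by linarith)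
          set z := AffineMap.lineMap x y t with hz
          have hfz : ∀ l : Fin (k+1), f l z = (1-t) * f l x + t * f l y := by
            intro l
            rw [hz, AffineMap.apply_lineMap, AffineMap.lineMap_apply_module]
            simp [smul_eq_mul]
          have hz0 : f 0 z = 0 := by
            rw [hfz 0, ht]; field_simp; ring
          have hzS : z ∈ S := by
            rw [hz, AffineMap.lineMap_apply]
            exact S.smul_vsub_vadd_mem t hy hx hx
          refine ⟨z, ⟨hzS, hz0⟩, ?_⟩
          intro i
          have e1 := hokx i.succ
          rw [show σ i.succ = τ i from congrFun hrσ i] at e1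
          have e2 := hoky i.succ
          rw [show σ' i.succ = τ i from congrFun hrσ' i] at e2
          have hfzi : g i z = (1-t) * f i.succ x + t * f i.succ y := hfz i.succ
          have h1t : (0:ℝ) < 1 - t := by linarith
          show OKc (τ i) (g i z)
          cases hb : τ i with
          | false =>
              rw [hb] at e1 e2
              rw [okc_false] at e1 e2 ⊢
              rw [hfzi]; nlinarith
          | true =>
              rw [hb] at e1 e2
              rw [okc_true] at e1 e2 ⊢
              rw [hfzi]; nlinarith
        have hI : ((r '' Cp) ∩ (r '' Cm)).ncard ≤ ∑ i ∈ Finset.range d, k.choose i :=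
          le_trans (Set.ncard_le_ncard hIB (Set.toFinite _)) hB
        calc C.ncard ≤ A.ncard + ((r '' Cp) ∩ (r '' Cm)).ncard := main
          _ ≤ ∑ i ∈ Finset.range (d+1), k.choose i + ∑ i ∈ Finset.range d, k.choose i := by
              exact Nat.add_le_add hAbound hI
          _ = ∑ i ∈ Finset.range (d+1), (k+1).choose i := (pascal_sum k d).symm


open Module

def OKc' (b : Bool) (t : ℝ) : Prop := if b then 0 < t else t < 0

/-- The affine map `ξ ↦ (∑ i, a i * ξ i) - b`. -/
noncomputable def rowAff {n : ℕ} (a : Fin n → ℝ) (b : ℝ) : (Fin n → ℝ) →ᵃ[ℝ] ℝ where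
  toFun ξ := (∑ i, a i * ξ i) - b
  linear :=
    { toFun := fun ξ => ∑ i, a i * ξ i
      map_add' := by
        intro u v
        simp [mul_add, Finset.sum_add_distrib]
      map_smul' := by
        intro c v
        simp [Finset.mul_sum]
        ring_nf
        simp [mul_assoc, mul_comm, mul_left_comm] }
  map_vadd' := by
    intro p v
    show (∑ i, a i * (v i + p i)) - b = (∑ i, a i * v i) + ((∑ i, a i * p i) - b)
    simp [mul_add, Finset.sum_add_distrib]
    ring

lemma rowAff_apply {n : ℕ} (a : Fin n → ℝ) (b : ℝ) (ξ : Fin n → ℝ) :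
    rowAff a b ξ = (∑ i, a i * ξ i) - b := rfl

/-- Two affine functionals with nonzero linear parts and the same zero hyperplane are
proportional. -/
lemma prop_of_eq_zeroset {n : ℕ} {a a' : Fin n → ℝ} {b b' : ℝ} (ha : a ≠ 0) (ha' : a' ≠ 0)
    (hset : {ξ : Fin n → ℝ | ∑ i, a i * ξ i = b} = {ξ | ∑ i, a' i * ξ i = b'}) :
    ∃ c : ℝ, c ≠ 0 ∧ ∀ ξ : Fin n → ℝ, (∑ i, a' i * ξ i) - b' = c * ((∑ i, a i * ξ i) - b) := by
  classical
  set L : (Fin n → ℝ) → ℝ := fun ξ => ∑ i, a i * ξ i with hL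
  set L' : (Fin n → ℝ) → ℝ := fun ξ => ∑ i, a' i * ξ i with hL'
  have hLadd : ∀ u v, L (u + v) = L u + L v := by
    intro u v; simp [hL, mul_add, Finset.sum_add_distrib]
  have hL'add : ∀ u v, L' (u + v) = L' u + L' v := by
    intro u v; simp [hL', mul_add, Finset.sum_add_distrib]
  have hLsingle : ∀ (j : Fin n) (c : ℝ), L (Pi.single j c) = a j * c := by
    intro j c
    simp [hL, Pi.single_apply, mul_comm]
  have hL'single : ∀ (j : Fin n) (c : ℝ), L' (Pi.single j c) = a' j * c := by
    intro j c
    simp [hL', Pi.single_apply, mul_comm]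
  obtain ⟨i₀, hi₀⟩ := Function.ne_iff.mp ha
  simp only [Pi.zero_apply] at hi₀
  set ξ₀ : Fin n → ℝ := Pi.single i₀ (b / a i₀) with hξ₀
  have hLξ₀ : L ξ₀ = b := by
    rw [hξ₀, hLsingle]; field_simp
  have hL'ξ₀ : L' ξ₀ = b' := by
    have : ξ₀ ∈ {ξ : Fin n → ℝ | L ξ = b} := hLξ₀
    rw [show {ξ : Fin n → ℝ | L ξ = b} = {ξ | L' ξ = b'} from hset] at this
    exact this
  have hker : ∀ v, L v = 0 → L' v = 0 := by
    intro v hv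
    have h1 : L (ξ₀ + v) = b := by rw [hLadd, hLξ₀, hv, add_zero]
    have : (ξ₀ + v) ∈ {ξ : Fin n → ℝ | L ξ = b} := h1
    rw [show {ξ : Fin n → ℝ | L ξ = b} = {ξ | L' ξ = b'} from hset] at this
    have h2 : L' (ξ₀ + v) = b' := this
    rw [hL'add, hL'ξ₀] at h2
    linarith
  set e : Fin n → ℝ := Pi.single i₀ 1 with he
  have hLe : L e = a i₀ := by rw [he, hLsingle]; ring
  have hLescale : ∀ (c : ℝ) v, L (v + Pi.single i₀ c) = L v + a i₀ * c := by
    intro c v; rw [hLadd, hLsingle]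
  have hL'escale : ∀ (c : ℝ) v, L' (v + Pi.single i₀ c) = L' v + a' i₀ * c := by
    intro c v; rw [hL'add, hL'single]
  set c : ℝ := a' i₀ / a i₀ with hc
  have hprop : ∀ ξ, L' ξ = c * L ξ := by
    intro ξ
    have hv : L (ξ + Pi.single i₀ (-(L ξ / a i₀))) = 0 := by
      rw [hLescale]; field_simp; ring
    have hv' := hker _ hv
    rw [hL'escale] at hv'
    rw [hc]; field_simp at hv' ⊢
    linear_combination hv'
  have hc0 : c ≠ 0 := by
    intro h0
    apply ha'
    funext j
    have := hprop (Pi.single j 1)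
    rw [h0, zero_mul, hL'single] at this
    simpa using this
  refine ⟨c, hc0, fun ξ => ?_⟩
  show L' ξ - b' = c * (L ξ - b)
  rw [hprop ξ, ← hL'ξ₀, hprop ξ₀, hLξ₀]
  ring


lemma lineMap_mem_convex {n : ℕ} {U : Set (Fin n → ℝ)} (hU : Convex ℝ U)
    {u w : Fin n → ℝ} (hu : u ∈ U) (hw : w ∈ U) {t : ℝ} (h0 : 0 ≤ t) (h1 : t ≤ 1) :
    AffineMap.lineMap u w t ∈ U := by
  rw [AffineMap.lineMap_apply_module]
  exact hU hu hw (by linarith) h0 (by ring)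

lemma root_subsingleton {n : ℕ} (f : (Fin n → ℝ) →ᵃ[ℝ] ℝ) (u w : Fin n → ℝ)
    (h : ¬(f u = 0 ∧ f w = 0)) :
    {t : ℝ | f (AffineMap.lineMap u w t) = 0}.Subsingleton := by
  have hfl : ∀ t : ℝ, f (AffineMap.lineMap u w t) = (1-t) * f u + t * f w := by
    intro t
    rw [AffineMap.apply_lineMap, AffineMap.lineMap_apply_module]
    simp [smul_eq_mul]
  intro t1 h1 t2 h2
  simp only [Set.mem_setOf_eq, hfl] at h1 h2
  by_contra hne
  have hsub : (t2 - t1) * (f w - f u) = 0 := by nlinarith [h1, h2]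
  have hwu : f w = f u := by
    rcases mul_eq_zero.mp hsub with h' | h'
    · exact absurd (by linarith [sub_eq_zero.mp h'] : t1 = t2) hne
    · linarith [sub_eq_zero.mp h']
  rw [hwu] at h1
  have hu0 : f u = 0 := by linear_combination h1
  exact h ⟨hu0, hwu.trans hu0⟩

lemma exists_avoid {n : ℕ} {U : Set (Fin n → ℝ)} (hU : Convex ℝ U) (hUne : U.Nonempty)
    {ι : Type*} (s : Finset ι) (f : ι → (Fin n → ℝ) →ᵃ[ℝ] ℝ)
    (h : ∀ i ∈ s, ∃ u ∈ U, f i u ≠ 0) :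
    ∃ u ∈ U, ∀ i ∈ s, f i u ≠ 0 := by
  classical
  induction s using Finset.induction_on with
  | empty => obtain ⟨u, hu⟩ := hUne; exact ⟨u, hu, by simp⟩
  | insert j s hjs ih =>
      obtain ⟨u, hu, hus⟩ := ih (fun i hi => h i (Finset.mem_insert_of_mem hi))
      obtain ⟨w, hw, hwj⟩ := h j (Finset.mem_insert_self j s)
      set B : Set ℝ := ⋃ i ∈ insert j s, {t : ℝ | f i (AffineMap.lineMap u w t) = 0} with hB
      have hBfin : B.Finite := by
        refine Set.Finite.biUnion (Finset.finite_toSet _) ?_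
        intro i hi
        rcases Finset.mem_insert.mp hi with rfl | hi'
        · exact (root_subsingleton (f i) u w (fun hc => hwj hc.2)).finite
        · exact (root_subsingleton (f i) u w (fun hc => hus i hi' hc.1)).finite
      have hIoo : (Set.Ioo (0:ℝ) 1).Infinite :=
        Set.infinite_coe_iff.mp (Set.Ioo.infinite (by norm_num))
      obtain ⟨t, ht⟩ := (hIoo.diff hBfin).nonempty
      refine ⟨AffineMap.lineMap u w t, lineMap_mem_convex hU hu hw (le_of_lt ht.1.1)
        (le_of_lt ht.1.2), ?_⟩
      intro i hi hzero
      exact ht.2 (Set.mem_biUnion hi hzero)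

lemma dense_avoid {n : ℕ} {U : Set (Fin n → ℝ)} (hU : Convex ℝ U)
    {ι : Type*} (s : Finset ι) (f : ι → (Fin n → ℝ) →ᵃ[ℝ] ℝ)
    (h : ∀ i ∈ s, ∃ u ∈ U, f i u ≠ 0)
    (ξ : Fin n → ℝ) (hξ : ξ ∈ U) {ε : ℝ} (hε : 0 < ε) :
    ∃ ζ ∈ U, (∀ i ∈ s, f i ζ ≠ 0) ∧ dist ξ ζ < ε := by
  classical
  obtain ⟨u, hu, hus⟩ := exists_avoid hU ⟨ξ, hξ⟩ s f h
  set B : Set ℝ := ⋃ i ∈ s, {t : ℝ | f i (AffineMap.lineMap ξ u t) = 0} with hB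
  have hBfin : B.Finite := by
    refine Set.Finite.biUnion (Finset.finite_toSet _) ?_
    intro i hi
    exact (root_subsingleton (f i) ξ u (fun hc => hus i hi hc.2)).finite
  set δ : ℝ := min 1 (ε / (‖u - ξ‖ + 1)) with hδ
  have hδ0 : 0 < δ := by
    apply lt_min one_pos
    positivity
  have hIoo : (Set.Ioo (0:ℝ) δ).Infinite :=
    Set.infinite_coe_iff.mp (Set.Ioo.infinite hδ0)
  obtain ⟨t, ht⟩ := (hIoo.diff hBfin).nonempty
  have ht0 : 0 < t := ht.1.1
  have htδ : t < δ := ht.1.2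
  have ht1 : t ≤ 1 := le_trans (le_of_lt htδ) (min_le_left _ _)
  refine ⟨AffineMap.lineMap ξ u t, lineMap_mem_convex hU hξ hu (le_of_lt ht0) ht1, ?_, ?_⟩
  · intro i hi hzero
    exact ht.2 (Set.mem_biUnion hi hzero)
  · have hdist : dist ξ (AffineMap.lineMap ξ u t) = t * ‖u - ξ‖ := by
      rw [AffineMap.lineMap_apply, dist_eq_norm]
      have e : ξ - (t • (u -ᵥ ξ) +ᵥ ξ) = (-t) • (u - ξ) := by
        simp only [vsub_eq_sub, vadd_eq_add]
        module
      rw [e, norm_smul]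
      simp [abs_of_pos ht0]
    rw [hdist]
    have h2 : t < ε / (‖u - ξ‖ + 1) := lt_of_lt_of_le htδ (min_le_right _ _)
    have h3 : (0:ℝ) ≤ ‖u - ξ‖ := norm_nonneg _
    have h4 : t * (‖u - ξ‖ + 1) < ε := (lt_div_iff₀ (by positivity)).mp h2
    nlinarith

lemma sign_const_on_convex {n : ℕ} {U : Set (Fin n → ℝ)} (hU : Convex ℝ U)
    (f : (Fin n → ℝ) →ᵃ[ℝ] ℝ) (hno : ∀ ζ ∈ U, f ζ ≠ 0) :
    ∀ ξ ∈ U, ∀ ξ' ∈ U, 0 < f ξ → 0 < f ξ' := by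
  intro ξ hξ ξ' hξ' hpos
  by_contra hneg
  have hneg' : f ξ' < 0 := lt_of_le_of_ne (not_lt.mp hneg) (hno ξ' hξ')
  set t : ℝ := f ξ / (f ξ - f ξ') with ht
  have hden : (0:ℝ) < f ξ - f ξ' := by linarith
  have ht0 : 0 < t := div_pos hpos hden
  have ht1 : t < 1 := (div_lt_one hden).mpr (by linarith)
  have hz : f (AffineMap.lineMap ξ ξ' t) = 0 := by
    rw [AffineMap.apply_lineMap, AffineMap.lineMap_apply_module]
    simp only [smul_eq_mul]
    rw [ht]; field_simp; ring
  exact hno _ (lineMap_mem_convex hU hξ hξ' (le_of_lt ht0) (le_of_lt ht1)) hz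


section
variable {nx ny nξ m : ℕ}

lemma swap_sum {p q : ℕ} (c : Fin p → Fin q → ℝ) (u : Fin q → ℝ) (v : Fin p → ℝ) :
    ∑ j, (∑ i, v i * c i j) * u j = ∑ i, (∑ j, c i j * u j) * v i := by
  simp only [Finset.sum_mul]
  rw [Finset.sum_comm]
  exact Finset.sum_congr rfl fun i _ => Finset.sum_congr rfl fun j _ => by ring

lemma feas_iff (hv : Fin m → ℤ) (H : Matrix (Fin m) (Fin nξ) ℤ)
    (A0 : Matrix (Fin m) (Fin nx) ℤ) (Ai : Fin nξ → Matrix (Fin m) (Fin nx) ℤ)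
    (B0 : Matrix (Fin m) (Fin ny) ℤ) (Bi : Fin nξ → Matrix (Fin m) (Fin ny) ℤ)
    (x : Fin nx → ℝ) (y : Fin ny → ℝ) (ξ : Fin nξ → ℝ) :
    FeasS hv H A0 Ai B0 Bi x y ξ ↔
      ∀ l, rowRhs hv A0 B0 x y l ≤ ∑ i, rowCoef H Ai Bi x y l i * ξ i := by
  unfold FeasS
  apply forall_congr'
  intro l
  have key : (∑ j, ((A0 l j : ℝ) + ∑ i, ξ i * (Ai i l j : ℝ)) * x j) +
      (∑ j, ((B0 l j : ℝ) + ∑ i, ξ i * (Bi i l j : ℝ)) * y j) -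
      ((hv l : ℝ) + ∑ i, (H l i : ℝ) * ξ i)
      = (∑ i, rowCoef H Ai Bi x y l i * ξ i) - rowRhs hv A0 B0 x y l := by
    simp only [rowCoef, rowRhs, add_mul, sub_mul, Finset.sum_add_distrib, Finset.sum_sub_distrib]
    rw [swap_sum (fun i j => (Ai i l j : ℝ)) x ξ, swap_sum (fun i j => (Bi i l j : ℝ)) y ξ]
    ring
  constructor <;> intro h <;> linarith [key]

end

/-- For every `x ∈ X` feasible for the two-stage robust problem there are
finitely many convex recourse-stable regions whose closures cover `U`, their number `R` being at
most `Σ_{i=0}^{n_ξ} C(|H(x)|, i)`; in particular `R ≤ Σ_{i=0}^{n_ξ} C(η, i)` for every `η ≥ 1`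
bounding `|H(x')|` over all feasible `x'`. -/
theorem stmt_8 (nx ny nξ m : ℕ) (hnx : 0 < nx) (hny : 0 < ny) (hnξ : 0 < nξ) (hm0 : 0 < m)
    (X : Set (Fin nx → ℝ)) (hXcomp : IsCompact X) (hXne : X.Nonempty)
    (Y : Set (Fin ny → ℝ)) (hYfin : Y.Finite) (hYne : Y.Nonempty)
    (hYint : ∀ y ∈ Y, ∀ i, ∃ z : ℤ, y i = (z : ℝ))
    (Yx : (Fin nx → ℝ) → Set (Fin ny → ℝ))
    (hYxsub : ∀ x ∈ X, Yx x ⊆ Y) (hYxne : ∀ x ∈ X, (Yx x).Nonempty)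
    (U : Set (Fin nξ → ℝ)) (hUcomp : IsCompact U) (hUconv : Convex ℝ U) (hUne : U.Nonempty)
    (hv : Fin m → ℤ) (H : Matrix (Fin m) (Fin nξ) ℤ)
    (A0 : Matrix (Fin m) (Fin nx) ℤ) (Ai : Fin nξ → Matrix (Fin m) (Fin nx) ℤ)
    (B0 : Matrix (Fin m) (Fin ny) ℤ) (Bi : Fin nξ → Matrix (Fin m) (Fin ny) ℤ) :
    ∀ x ∈ X, Feasible2RO hv H A0 Ai B0 Bi Yx U x →
      ∃ (R : ℕ) (D : Fin R → Set (Fin nξ → ℝ)),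
        (∀ t, D t ⊆ U ∧ Convex ℝ (D t) ∧
          RecourseStableS hv H A0 Ai B0 Bi Yx x (D t)) ∧
        (⋃ t, closure (D t)) = U ∧
        R ≤ ∑ i ∈ Finset.range (nξ + 1),
          Nat.choose ((HypSet hv H A0 Ai B0 Bi Yx U x).ncard) i ∧
        ∀ η : ℕ, 1 ≤ η →
          (∀ x' ∈ X, Feasible2RO hv H A0 Ai B0 Bi Yx U x' →
            (HypSet hv H A0 Ai B0 Bi Yx U x').ncard ≤ η) →
          R ≤ ∑ i ∈ Finset.range (nξ + 1), Nat.choose η i := by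
  classical
  intro x hx hfeas
  set K := HypSet hv H A0 Ai B0 Bi Yx U x with hK
  have hKfin : K.Finite := by
    have hsub : K ⊆ (fun p : (Fin ny → ℝ) × Fin m =>
        {ξ : Fin nξ → ℝ | ∑ i, rowCoef H Ai Bi x p.1 p.2 i * ξ i
          = rowRhs hv A0 B0 x p.1 p.2}) '' (Y ×ˢ (Set.univ : Set (Fin m))) := by
      rintro P ⟨y, hy, l, hne, hPeq, hPU⟩
      exact ⟨(y, l), ⟨hYxsub x hx hy, Set.mem_univ l⟩, hPeq.symm⟩
    exact Set.Finite.subset (Set.Finite.image _ (hYfin.prod Set.finite_univ)) hsub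
  set G := {P | P ∈ K ∧ ¬ U ⊆ P} with hG
  have hGfin : G.Finite := hKfin.subset fun P hP => hP.1
  set Gs := hGfin.toFinset with hGs
  set k := Gs.card with hk
  set eP : Fin k → Set (Fin nξ → ℝ) := fun i => (Gs.equivFin.symm i).1 with heP
  have hePmem : ∀ i, eP i ∈ G := fun i => hGfin.mem_toFinset.mp (Gs.equivFin.symm i).2
  have hePsurj : ∀ P ∈ G, ∃ i, eP i = P := by
    intro P hP
    refine ⟨Gs.equivFin ⟨P, hGfin.mem_toFinset.mpr hP⟩, ?_⟩
    rw [heP]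
    simp
  have hrep : ∀ i : Fin k, ∃ y, y ∈ Yx x ∧ ∃ l : Fin m, rowCoef H Ai Bi x y l ≠ 0 ∧
      eP i = {ξ | ∑ j, rowCoef H Ai Bi x y l j * ξ j = rowRhs hv A0 B0 x y l} := by
    intro i
    obtain ⟨y, hy, l, h1, h2, h3⟩ := (hePmem i).1
    exact ⟨y, hy, l, h1, h2⟩
  choose yc hyc lc hlc hPeqc using hrep
  set a : Fin k → Fin nξ → ℝ := fun i => rowCoef H Ai Bi x (yc i) (lc i) with ha
  set bb : Fin k → ℝ := fun i => rowRhs hv A0 B0 x (yc i) (lc i) with hbb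
  set f : Fin k → (Fin nξ → ℝ) →ᵃ[ℝ] ℝ := fun i => rowAff (a i) (bb i) with hf
  have hfapp : ∀ (i : Fin k) ξ, f i ξ = (∑ j, a i j * ξ j) - bb i := by
    intro i ξ; rw [hf]; rfl
  have havoid : ∀ i : Fin k, ∃ u ∈ U, f i u ≠ 0 := by
    intro i
    obtain ⟨u, hu, hnotin⟩ := Set.not_subset.mp (hePmem i).2
    refine ⟨u, hu, fun h0 => hnotin ?_⟩
    rw [hfapp i u] at h0
    rw [hPeqc i]
    exact sub_eq_zero.mp h0
  set Dσ : (Fin k → Bool) → Set (Fin nξ → ℝ) :=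
    fun σ => {ξ | ξ ∈ U ∧ ∀ i, OKc (σ i) (f i ξ)} with hDσ
  have hDσmem : ∀ σ ξ, ξ ∈ Dσ σ ↔ (ξ ∈ U ∧ ∀ i, OKc (σ i) (f i ξ)) := by
    intro σ ξ; rw [hDσ]; exact Iff.rfl
  set Cs : Finset (Fin k → Bool) := Finset.univ.filter (fun σ => (Dσ σ).Nonempty) with hCs
  have hconst : ∀ (σ : Fin k → Bool), ∀ y ∈ Yx x, ∀ l : Fin m,
      ∀ ξ ∈ Dσ σ, ∀ ξ' ∈ Dσ σ,
      (rowRhs hv A0 B0 x y l ≤ ∑ i, rowCoef H Ai Bi x y l i * ξ i) →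
      (rowRhs hv A0 B0 x y l ≤ ∑ i, rowCoef H Ai Bi x y l i * ξ' i) := by
    intro σ y hy l ξ hξm ξ' hξ'm hle
    have hξ := (hDσmem σ ξ).mp hξm
    have hξ' := (hDσmem σ ξ').mp hξ'm
    rcases eq_or_ne (rowCoef H Ai Bi x y l) 0 with h0 | h0
    · have e0 : ∀ ζ : Fin nξ → ℝ, ∑ i, rowCoef H Ai Bi x y l i * ζ i = 0 := by
        intro ζ
        rw [Finset.sum_eq_zero]
        intro i _
        rw [show rowCoef H Ai Bi x y l i = 0 from congrFun h0 i, zero_mul]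
      rw [e0] at hle
      rw [e0]
      exact hle
    · by_cases hPU : (({ζ : Fin nξ → ℝ | ∑ i, rowCoef H Ai Bi x y l i * ζ i
          = rowRhs hv A0 B0 x y l}) ∩ U).Nonempty
      · by_cases hsubU : U ⊆ {ζ : Fin nξ → ℝ | ∑ i, rowCoef H Ai Bi x y l i * ζ i
            = rowRhs hv A0 B0 x y l}
        · have h2 := hsubU hξ'.1
          simp only [Set.mem_setOf_eq] at h2
          exact le_of_eq h2.symm
        · have hPK : {ζ : Fin nξ → ℝ | ∑ i, rowCoef H Ai Bi x y l i * ζ i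
              = rowRhs hv A0 B0 x y l} ∈ K := ⟨y, hy, l, h0, rfl, hPU⟩
          obtain ⟨i, hi⟩ := hePsurj _ ⟨hPK, hsubU⟩
          have hseteq : {ζ : Fin nξ → ℝ | ∑ j, a i j * ζ j = bb i}
              = {ζ : Fin nξ → ℝ | ∑ j, rowCoef H Ai Bi x y l j * ζ j
                  = rowRhs hv A0 B0 x y l} := by
            rw [← hPeqc i, hi]
          obtain ⟨c, hc0, hcp⟩ := prop_of_eq_zeroset (hlc i) h0 hseteq
          have e1 := hcp ξ
          have e2 := hcp ξ'
          have hs1 := hξ.2 i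
          have hs2 := hξ'.2 i
          rw [hfapp i ξ] at hs1
          rw [hfapp i ξ'] at hs2
          cases hb : σ i with
          | true =>
              rw [hb, okc_true] at hs1 hs2
              nlinarith [e1, e2, hs1, hs2, hle]
          | false =>
              rw [hb, okc_false] at hs1 hs2
              nlinarith [e1, e2, hs1, hs2, hle]
      · have hno : ∀ ζ ∈ U, rowAff (rowCoef H Ai Bi x y l) (rowRhs hv A0 B0 x y l) ζ ≠ 0 := by
          intro ζ hζ hzero
          rw [rowAff_apply] at hzero
          exact hPU ⟨ζ, sub_eq_zero.mp hzero, hζ⟩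
        rcases lt_trichotomy ((∑ i, rowCoef H Ai Bi x y l i * ξ i)
            - rowRhs hv A0 B0 x y l) 0 with h1 | h1 | h1
        · linarith
        · exact absurd (by rw [rowAff_apply]; exact h1) (hno ξ hξ.1)
        · have hgt : 0 < rowAff (rowCoef H Ai Bi x y l) (rowRhs hv A0 B0 x y l) ξ := by
            rw [rowAff_apply]; exact h1
          have hgt' := sign_const_on_convex hUconv _ hno ξ hξ.1 ξ' hξ'.1 hgt
          rw [rowAff_apply] at hgt'
          linarith
  have hRS : ∀ σ, RecourseStableS hv H A0 Ai B0 Bi Yx x (Dσ σ) := by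
    intro σ y hy
    by_cases hne : (Dσ σ).Nonempty
    · obtain ⟨ξ₀, hξ₀⟩ := hne
      by_cases hF : FeasS hv H A0 Ai B0 Bi x y ξ₀
      · left
        intro ξ hξ
        rw [feas_iff] at hF ⊢
        intro l
        exact hconst σ y hy l ξ₀ hξ₀ ξ hξ (hF l)
      · right
        intro ξ hξ hFξ
        apply hF
        rw [feas_iff] at hFξ ⊢
        intro l
        exact hconst σ y hy l ξ hξ ξ₀ hξ₀ (hFξ l)
    · left
      intro ξ hξ
      exact absurd ⟨ξ, hξ⟩ hne
  have hRK : Cs.card ≤ ∑ i ∈ Finset.range (nξ + 1), Nat.choose (K.ncard) i := by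
    have hfinrank : Module.finrank ℝ (⊤ : AffineSubspace ℝ (Fin nξ → ℝ)).direction ≤ nξ := by
      rw [AffineSubspace.direction_top]
      simp [finrank_top, finrank_pi]
    have hcells := cellCount k nξ ⊤ hfinrank f
    have hCssub : (↑Cs : Set (Fin k → Bool)) ⊆
        {σ : Fin k → Bool | ∃ ξ ∈ (⊤ : AffineSubspace ℝ (Fin nξ → ℝ)), ∀ i, OKc (σ i) (f i ξ)} := by
      intro σ hσ
      rw [hCs] at hσ
      obtain ⟨ζ, hζ⟩ := (Finset.mem_filter.mp hσ).2
      exact ⟨ζ, trivial, ((hDσmem σ ζ).mp hζ).2⟩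
    have hR1 : Cs.card ≤ ∑ i ∈ Finset.range (nξ+1), k.choose i := by
      rw [← Set.ncard_coe_finset]
      exact le_trans (Set.ncard_le_ncard hCssub (Set.toFinite _)) hcells
    have hkK : k ≤ K.ncard := by
      have h1 : k = G.ncard := by
        rw [hk, Set.ncard_eq_toFinset_card _ hGfin]
      rw [h1]
      exact Set.ncard_le_ncard (fun P hP => hP.1) hKfin
    exact le_trans hR1 (sum_choose_mono _ hkK)
  refine ⟨Cs.card, fun t => Dσ ((Cs.equivFin.symm t).1), ?_, ?_, hRK, ?_⟩
  · intro t
    refine ⟨fun ξ hξ => ((hDσmem _ ξ).mp hξ).1, ?_, hRS _⟩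
    have hsplit : Dσ ((Cs.equivFin.symm t).1)
        = U ∩ ⋂ i, {ξ | OKc (((Cs.equivFin.symm t).1) i) (f i ξ)} := by
      ext ζ
      rw [hDσmem]
      constructor
      · rintro ⟨h1, h2⟩
        exact ⟨h1, Set.mem_iInter.mpr h2⟩
      · rintro ⟨h1, h2⟩
        exact ⟨h1, fun i => Set.mem_iInter.mp h2 i⟩
    show Convex ℝ (Dσ ((Cs.equivFin.symm t).1))
    rw [hsplit]
    refine hUconv.inter (convex_iInter fun i => ?_)
    cases hb : ((Cs.equivFin.symm t).1) i with
    | true =>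
        have heq : {ξ : Fin nξ → ℝ | OKc true (f i ξ)} = (f i) ⁻¹' (Set.Ioi 0) := by
          ext ζ; simp [OKc]
        rw [heq]
        exact (convex_Ioi (0:ℝ)).affine_preimage (f i)
    | false =>
        have heq : {ξ : Fin nξ → ℝ | OKc false (f i ξ)} = (f i) ⁻¹' (Set.Iio 0) := by
          ext ζ; simp [OKc]
        rw [heq]
        exact (convex_Iio (0:ℝ)).affine_preimage (f i)
  · apply Set.Subset.antisymm
    · refine Set.iUnion_subset fun t => ?_
      refine closure_minimal (fun ξ hξ => ((hDσmem _ ξ).mp hξ).1) hUcomp.isClosed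
    · intro ζ hζ
      have hcl : closure (⋃ t, Dσ ((Cs.equivFin.symm t).1))
          ⊆ ⋃ t, closure (Dσ ((Cs.equivFin.symm t).1)) :=
        closure_minimal (Set.iUnion_mono fun t => subset_closure)
          (isClosed_iUnion_of_finite fun t => isClosed_closure)
      apply hcl
      rw [Metric.mem_closure_iff]
      intro ε hε
      obtain ⟨ζ', hζ'U, hζ'ne, hdist⟩ := dense_avoid hUconv Finset.univ f
        (fun i _ => havoid i) ζ hζ hε
      refine ⟨ζ', ?_, hdist⟩
      set σ : Fin k → Bool := fun i => if 0 < f i ζ' then true else false with hσdef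
      have hmem : ζ' ∈ Dσ σ := by
        rw [hDσmem]
        refine ⟨hζ'U, fun i => ?_⟩
        by_cases hp : 0 < f i ζ'
        · have hb : σ i = true := by rw [hσdef]; simp [hp]
          rw [hb, okc_true]
          exact hp
        · have hneg : f i ζ' < 0 :=
            lt_of_le_of_ne (not_lt.mp hp) (hζ'ne i (Finset.mem_univ i))
          have hb : σ i = false := by rw [hσdef]; simp [hp]
          rw [hb, okc_false]
          exact hneg
      have hσCs : σ ∈ Cs := by
        rw [hCs]
        exact Finset.mem_filter.mpr ⟨Finset.mem_univ _, ⟨ζ', hmem⟩⟩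
      refine Set.mem_iUnion.mpr ⟨Cs.equivFin ⟨σ, hσCs⟩, ?_⟩
      rw [Equiv.symm_apply_apply]
      exact hmem
  · intro η hη hb
    exact le_trans hRK (sum_choose_mono _ (hb x hx hfeas))
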